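/- Fix a real ρ > 1, an integer n ≥ 1, and μ₁,…,μₙ ∈ ℂ with |μᵢ| < ρ for all i. Let (u_k)_{k≥0} be a complex sequence with ‖u‖_ρ := ∑_{k≥0} |u_k|·ρᵏ < ∞, so that u(λ) = ∑_{k≥0} u_k·λᵏ defines a holomorphic function on the disc |λ| < ρ. Then there exist a unique complex sequence (q_k)_{k≥0} with ∑_{k≥0} |q_k|·ρᵏ < ∞ and a unique polynomial r of degree < n such that u(λ) = (λ−μ₁)⋯(λ−μₙ)·q(λ) + r(λ) for all |λ| < ρ, where q(λ) = ∑_{k≥0} q_k·λᵏ. Moreover the quotient satisfies the norm bound ∑_{k≥0} |q_k|·ρᵏ ≤ ‖u‖_ρ / ((ρ−|μ₁|)⋯(ρ−|μₙ|)). -/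

import Mathlib

open Polynomial Topology Filter

lemma summ_eval {ρ : ℝ} {q : ℕ → ℂ} (hq : Summable fun k => ‖q k‖ * ρ ^ k)
    {z : ℂ} (hz : ‖z‖ ≤ ρ) : Summable fun k => q k * z ^ k := by
  refine Summable.of_norm (Summable.of_nonneg_of_le (fun k => norm_nonneg _) (fun k => ?_) hq)
  simp only [norm_mul, norm_pow]
  exact mul_le_mul_of_nonneg_left (pow_le_pow_left₀ (norm_nonneg z) hz k)
    (norm_nonneg _)

lemma contOn {ρ : ℝ} {q : ℕ → ℂ} (hq : Summable fun k => ‖q k‖ * ρ ^ k) :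
    ContinuousOn (fun z : ℂ => ∑' k, q k * z ^ k) {z : ℂ | ‖z‖ < ρ} := by
  refine continuousOn_tsum (fun k => ((continuous_const.mul (continuous_pow k)).continuousOn))
    hq (fun k z hz => ?_)
  simp only [norm_mul, norm_pow]
  exact mul_le_mul_of_nonneg_left (pow_le_pow_left₀ (norm_nonneg z) (le_of_lt hz) k)
    (norm_nonneg _)

lemma eq_zero_at {s : Set ℂ} (hs : IsOpen s) {F : ℂ → ℂ} (hF : ContinuousOn F s)
    {μ : ℂ} (hμ : μ ∈ s) (h : ∀ z ∈ s, z ≠ μ → F z = 0) : F μ = 0 := by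
  have hset : s \ {μ} = {μ}ᶜ ∩ s := by ext; simp [and_comm]
  have hne : (𝓝[s \ {μ}] μ).NeBot := by
    rw [hset, ← nhdsWithin_restrict' _ (hs.mem_nhds hμ)]
    exact Module.punctured_nhds_neBot ℝ ℂ μ
  have h1 : Filter.Tendsto F (𝓝[s \ {μ}] μ) (𝓝 (F μ)) :=
    ((hF μ hμ).mono Set.diff_subset).tendsto
  have h2 : Filter.Tendsto F (𝓝[s \ {μ}] μ) (𝓝 0) := by
    refine Filter.Tendsto.congr' ?_ tendsto_const_nhds
    filter_upwards [self_mem_nhdsWithin] with z hz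
    exact (h z hz.1 hz.2).symm
  exact tendsto_nhds_unique h1 h2

lemma coeff_zero {ρ : ℝ} (hρ : 1 < ρ) {q : ℕ → ℂ}
    (hq : Summable fun k => ‖q k‖ * ρ ^ k)
    (h : ∀ z : ℂ, ‖z‖ < ρ → ∑' k, q k * z ^ k = 0) : ∀ j, q j = 0 := by
  have hρ0 : (0:ℝ) < ρ := lt_trans one_pos hρ
  intro j
  induction j using Nat.strong_induction_on with
  | _ j ih =>
  -- shifted sequence is summable with weight
  have hshift : Summable fun k => ‖q (k + j)‖ * ρ ^ k := by
    refine Summable.of_nonneg_of_le (fun k => by positivity) (fun k => ?_)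
      ((summable_nat_add_iff j).mpr hq)
    exact mul_le_mul_of_nonneg_left (pow_le_pow_right₀ (le_of_lt hρ) (Nat.le_add_right k j))
      (norm_nonneg _)
  have hg : ∀ z : ℂ, ‖z‖ < ρ → z ≠ 0 → ∑' k, q (k + j) * z ^ k = 0 := by
    intro z hz hz0
    have hsum : Summable fun k => q k * z ^ k := summ_eval hq (le_of_lt hz)
    have key := hsum.sum_add_tsum_nat_add j
    rw [h z hz] at key
    have hfront : ∑ i ∈ Finset.range j, q i * z ^ i = 0 := by
      apply Finset.sum_eq_zero
      intro i hi
      rw [ih i (Finset.mem_range.mp hi), zero_mul]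
    rw [hfront, zero_add] at key
    have : ∑' k, q (k + j) * z ^ (k + j) = ∑' k, (q (k + j) * z ^ k) * z ^ j := by
      refine tsum_congr fun k => ?_
      rw [pow_add]; ring
    rw [this, tsum_mul_right] at key
    rcases mul_eq_zero.mp key with h1 | h1
    · exact h1
    · exact absurd h1 (pow_ne_zero j hz0)
  have h0 : (fun z : ℂ => ∑' k, q (k + j) * z ^ k) 0 = 0 := by
    refine eq_zero_at (isOpen_lt (by continuity) continuous_const) (contOn hshift) ?_ ?_
    · simpa using hρ0
    · intro z hz hz0
      exact hg z hz hz0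
  have : ∑' k, q (k + j) * (0:ℂ) ^ k = q j := by
    rw [tsum_eq_single 0 (fun k hk => by rw [zero_pow hk, mul_zero])]
    simp
  rw [← this]
  exact h0

lemma div_lemma {ρ : ℝ} (hρ : 0 < ρ) :
    ∀ (n : ℕ) (μ : Fin n → ℂ), (∀ i, ‖μ i‖ < ρ) →
    ∀ (Q : ℂ → ℂ), ContinuousOn Q {z : ℂ | ‖z‖ < ρ} → ∀ (r : Polynomial ℂ),
    (∀ z : ℂ, ‖z‖ < ρ → (∏ i, (z - μ i)) * Q z = r.eval z) →
    ∃ r' : Polynomial ℂ, r = (∏ i, (X - C (μ i))) * r' ∧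
      ∀ z : ℂ, ‖z‖ < ρ → Q z = r'.eval z := by
  intro n
  induction n with
  | zero =>
    intro μ hμ Q hQ r hr
    exact ⟨r, by simp, fun z hz => by simpa using hr z hz⟩
  | succ n ih =>
    intro μ hμ Q hQ r hr
    -- peel first root
    have hμ0 : ‖μ 0‖ < ρ := hμ 0
    have hroot : r.eval (μ 0) = 0 := by
      have := hr (μ 0) hμ0
      rw [← this, Fin.prod_univ_succ]
      simp
    obtain ⟨r₁, hr₁⟩ := (dvd_iff_isRoot.mpr hroot)
    -- define Q' z = (∏ i : Fin n, (z - μ i.succ)) * Q z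
    set Q' : ℂ → ℂ := fun z => (∏ i : Fin n, (z - μ i.succ)) * Q z with hQ'def
    have hQ'cont : ContinuousOn Q' {z : ℂ | ‖z‖ < ρ} := by
      refine ContinuousOn.mul ?_ hQ
      exact (continuous_finset_prod _ (fun i _ => continuous_id.sub continuous_const)).continuousOn
    have hQ'eq : ∀ z : ℂ, ‖z‖ < ρ → Q' z = r₁.eval z := by
      intro z hz
      have hF : ContinuousOn (fun z => Q' z - r₁.eval z) {z : ℂ | ‖z‖ < ρ} :=
        hQ'cont.sub (Polynomial.continuous r₁).continuousOn
      have hoff : ∀ w ∈ {z : ℂ | ‖z‖ < ρ}, w ≠ μ 0 → Q' w - r₁.eval w = 0 := by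
        intro w hw hwne
        have h1 := hr w hw
        rw [Fin.prod_univ_succ, hr₁] at h1
        simp only [eval_mul, eval_sub, eval_X, eval_C] at h1
        have h2 : (w - μ 0) * (Q' w - r₁.eval w) = 0 := by rw [hQ'def]; ring_nf; linear_combination h1
        rcases mul_eq_zero.mp h2 with h3 | h3
        · exact absurd (sub_eq_zero.mp h3) hwne
        · exact h3
      by_cases hcase : z = μ 0
      · subst hcase
        have := eq_zero_at (isOpen_lt (by continuity) continuous_const) hF hμ0 hoff
        exact sub_eq_zero.mp this
      · have := hoff z hz hcase
        exact sub_eq_zero.mp this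
    obtain ⟨r', hfac, hQr'⟩ := ih (fun i => μ i.succ) (fun i => hμ i.succ) Q hQ r₁ 
      (fun z hz => (hQ'eq z hz).symm ▸ rfl)
    refine ⟨r', ?_, hQr'⟩
    rw [hr₁, hfac, Fin.prod_univ_succ]
    ring
section StepLemma

set_option maxHeartbeats 1000000 in
lemma step {ρ : ℝ} (hρ : 1 < ρ) {μ : ℂ} (hμ : ‖μ‖ < ρ) {u : ℕ → ℂ}
    (hu : Summable fun k => ‖u k‖ * ρ ^ k) :
    ∃ q : ℕ → ℂ, ∃ c : ℂ, (Summable fun k => ‖q k‖ * ρ ^ k) ∧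
      (∑' k, ‖q k‖ * ρ ^ k)
        ≤ (∑' k, ‖u k‖ * ρ ^ k) / (ρ - ‖μ‖) ∧
      ∀ z : ℂ, ‖z‖ < ρ →
        ∑' k, u k * z ^ k = (z - μ) * (∑' k, q k * z ^ k) + c := by
  have hρ0 : (0:ℝ) < ρ := lt_trans one_pos hρ
  have hρne : ρ ≠ 0 := ne_of_gt hρ0
  set a := ‖μ‖ with ha
  have ha0 : 0 ≤ a := norm_nonneg μ
  have haρ : a / ρ < 1 := (div_lt_one hρ0).mpr hμ
  have haρ0 : 0 ≤ a / ρ := div_nonneg ha0 (le_of_lt hρ0)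
  set T := ∑' k, ‖u k‖ * ρ ^ k with hT
  have hT0 : 0 ≤ T := tsum_nonneg (fun k => by positivity)
  set f : ℕ × ℕ → ℝ := fun p => ‖u (p.2 + 1 + p.1)‖ * ρ ^ p.2 * a ^ p.1 with hf
  have hf0 : ∀ p, 0 ≤ f p := fun p => by
    simp only [hf]; positivity
  have hkey : ∀ j k : ℕ,
      ‖u (k + (1 + j))‖ * ρ ^ (k + (1 + j)) * ((a / ρ) ^ j / ρ) = f (j, k) := by
    intro j k
    simp only [hf]
    rw [show k + (1 + j) = k + 1 + j from by omega]
    rw [pow_add, pow_add, pow_one, div_pow]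
    have hρj : (ρ:ℝ) ^ j ≠ 0 := pow_ne_zero j hρne
    field_simp
  have hfiber : ∀ j : ℕ, Summable fun k => f (j, k) := by
    intro j
    have h1 : Summable fun k => ‖u (k + (1 + j))‖ * ρ ^ (k + (1 + j)) :=
      (summable_nat_add_iff (f := fun k => ‖u k‖ * ρ ^ k) (1 + j)).mpr hu
    exact (h1.mul_right ((a / ρ) ^ j / ρ)).congr (fun k => hkey j k)
  have htail : ∀ j : ℕ, ∑' k, ‖u (k + (1 + j))‖ * ρ ^ (k + (1 + j)) ≤ T := by
    intro j
    have h1 := Summable.sum_add_tsum_nat_add (f := fun k => ‖u k‖ * ρ ^ k) (1 + j) hu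
    have h2 : 0 ≤ ∑ i ∈ Finset.range (1 + j), ‖u i‖ * ρ ^ i :=
      Finset.sum_nonneg (fun i _ => by positivity)
    rw [hT]; linarith
  have hfibersum : ∀ j : ℕ, ∑' k, f (j, k) ≤ T / ρ * (a / ρ) ^ j := by
    intro j
    have h1 : Summable fun k => ‖u (k + (1 + j))‖ * ρ ^ (k + (1 + j)) :=
      (summable_nat_add_iff (f := fun k => ‖u k‖ * ρ ^ k) (1 + j)).mpr hu
    calc ∑' k, f (j, k)
        = (∑' k, ‖u (k + (1 + j))‖ * ρ ^ (k + (1 + j))) * ((a / ρ) ^ j / ρ) := by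
          rw [← tsum_mul_right]; exact tsum_congr fun k => (hkey j k).symm
      _ ≤ T * ((a / ρ) ^ j / ρ) := by
          apply mul_le_mul_of_nonneg_right (htail j)
          positivity
      _ = T / ρ * (a / ρ) ^ j := by ring
  have houter : Summable fun j => ∑' k, f (j, k) := by
    refine Summable.of_nonneg_of_le (fun j => tsum_nonneg fun k => hf0 _) hfibersum ?_
    exact (summable_geometric_of_lt_one haρ0 haρ).mul_left _
  have hsumf : Summable f := (summable_prod_of_nonneg hf0).mpr ⟨hfiber, houter⟩
  have htsumf : ∑' p, f p ≤ T / (ρ - a) := by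
    rw [Summable.tsum_prod' hsumf hfiber]
    calc ∑' j, ∑' k, f (j, k) ≤ ∑' j, T / ρ * (a / ρ) ^ j := by
          refine Summable.tsum_le_tsum hfibersum houter ?_
          exact (summable_geometric_of_lt_one haρ0 haρ).mul_left _
      _ = T / ρ * (1 - a / ρ)⁻¹ := by
          rw [tsum_mul_left, tsum_geometric_of_lt_one haρ0 haρ]
      _ = T / (ρ - a) := by
          have key : ρ * (1 - a / ρ) = ρ - a := by field_simp
          rw [← div_eq_mul_inv, div_div, key]
  -- define q
  set q : ℕ → ℂ := fun k => ∑' j, u (k + 1 + j) * μ ^ j with hqdef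
  have hfib2 : ∀ k : ℕ, Summable fun j => f (j, k) := by
    intro k
    have hinj : Function.Injective (fun j : ℕ => ((j, k) : ℕ × ℕ)) :=
      fun x y hxy => congrArg Prod.fst hxy
    exact hsumf.comp_injective hinj
  have hnormj : ∀ k : ℕ, Summable fun j => ‖u (k + 1 + j) * μ ^ j‖ := by
    intro k
    refine ((hfib2 k).mul_right ((ρ ^ k)⁻¹)).congr fun j => ?_
    simp only [hf, norm_mul, norm_pow, ← ha]
    have hne : (ρ:ℝ) ^ k ≠ 0 := pow_ne_zero k hρne
    field_simp
  have hsumj : ∀ k : ℕ, Summable fun j => u (k + 1 + j) * μ ^ j :=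
    fun k => (hnormj k).of_norm
  have hqbound : ∀ k, ‖q k‖ * ρ ^ k ≤ ∑' j, f (j, k) := by
    intro k
    have h1 : ‖q k‖ ≤ ∑' j, ‖u (k + 1 + j) * μ ^ j‖ := by
      simpa using norm_tsum_le_tsum_norm (hnormj k)
    calc ‖q k‖ * ρ ^ k
        ≤ (∑' j, ‖u (k + 1 + j) * μ ^ j‖) * ρ ^ k :=
          mul_le_mul_of_nonneg_right h1 (by positivity)
      _ = ∑' j, f (j, k) := by
          rw [← tsum_mul_right]
          refine tsum_congr fun j => ?_
          simp only [hf, norm_mul, norm_pow, ← ha]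
          ring
  have hG : Summable fun k => ∑' j, f (j, k) := by
    have hswap : Summable fun p : ℕ × ℕ => f p.swap := hsumf.prod_symm
    exact ((summable_prod_of_nonneg (fun p => hf0 p.swap)).mp hswap).2
  have hqsum : Summable fun k => ‖q k‖ * ρ ^ k :=
    Summable.of_nonneg_of_le (fun k => by positivity) hqbound hG
  have hqtsum : (∑' k, ‖q k‖ * ρ ^ k) ≤ T / (ρ - a) := by
    calc (∑' k, ‖q k‖ * ρ ^ k) ≤ ∑' k, ∑' j, f (j, k) :=
          Summable.tsum_le_tsum hqbound hqsum hG
      _ = ∑' p : ℕ × ℕ, f p.swap := (Summable.tsum_prod' hsumf.prod_symm hfib2).symm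
      _ = ∑' p, f p := ((Equiv.prodComm ℕ ℕ).tsum_eq f)
      _ ≤ T / (ρ - a) := htsumf
  -- recurrence
  have hrec : ∀ k, q k = u (k + 1) + μ * q (k + 1) := by
    intro k
    have h1 := Summable.tsum_eq_zero_add (hsumj k)
    rw [hqdef]
    simp only []
    rw [h1]
    have h2 : ∑' j, u (k + 1 + (j + 1)) * μ ^ (j + 1)
        = μ * ∑' j, u (k + 1 + 1 + j) * μ ^ j := by
      rw [← tsum_mul_left]
      refine tsum_congr fun j => ?_
      rw [show k + 1 + (j + 1) = k + 1 + 1 + j from by omega, pow_succ]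
      ring
    rw [h2]
    simp
  set c : ℂ := ∑' j, u j * μ ^ j with hcdef
  have hc : c = u 0 + μ * q 0 := by
    have h1 := Summable.tsum_eq_zero_add (summ_eval hu (le_of_lt hμ))
    rw [hcdef, h1]
    have h2 : ∑' j, u (j + 1) * μ ^ (j + 1) = μ * ∑' j, u (0 + 1 + j) * μ ^ j := by
      rw [← tsum_mul_left]
      refine tsum_congr fun j => ?_
      rw [show (0 : ℕ) + 1 + j = j + 1 from by omega, pow_succ]
      ring
    rw [h2]
    simp [hqdef]
  refine ⟨q, c, hqsum, hqtsum, ?_⟩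
  intro z hz
  have hzρ : ‖z‖ ≤ ρ := le_of_lt hz
  have husz : Summable fun k => u k * z ^ k := summ_eval hu hzρ
  have hsz : Summable fun k => q k * z ^ k := summ_eval hqsum hzρ
  set Sq : ℂ := ∑' k, q k * z ^ k with hSq
  have s1 : Summable fun k => q k * z ^ (k + 1) :=
    (hsz.mul_left z).congr fun k => by rw [pow_succ]; ring
  have s2 : Summable fun k => q (k + 1) * z ^ (k + 1) := (summable_nat_add_iff (f := fun k => q k * z ^ k) 1).mpr hsz
  have h3 : ∑' k, q (k + 1) * z ^ (k + 1) = Sq - q 0 := by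
    have := Summable.tsum_eq_zero_add hsz
    rw [hSq, this]
    simp
  have h4 : ∑' k, q k * z ^ (k + 1) = z * Sq := by
    rw [hSq, ← tsum_mul_left]
    exact tsum_congr fun k => by rw [pow_succ]; ring
  have h1 := Summable.tsum_eq_zero_add husz
  have h2 : ∑' k, u (k + 1) * z ^ (k + 1)
      = ∑' k, (q k * z ^ (k + 1) - μ * (q (k + 1) * z ^ (k + 1))) := by
    refine tsum_congr fun k => ?_
    have := hrec k
    have hu1 : u (k + 1) = q k - μ * q (k + 1) := by linear_combination -this
    rw [hu1]; ring
  rw [h1, h2, Summable.tsum_sub s1 (s2.mul_left μ), tsum_mul_left, h3, h4, hc]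
  ring

end StepLemma

lemma exist {ρ : ℝ} (hρ : 1 < ρ) :
    ∀ (n : ℕ) (μ : Fin n → ℂ), (∀ i, ‖μ i‖ < ρ) →
    ∀ u : ℕ → ℂ, (Summable fun k => ‖u k‖ * ρ ^ k) →
    ∃ q : ℕ → ℂ, ∃ r : Polynomial ℂ,
      (Summable fun k => ‖q k‖ * ρ ^ k) ∧
      ((∑' k, ‖q k‖ * ρ ^ k)
        ≤ (∑' k, ‖u k‖ * ρ ^ k) / ∏ i, (ρ - ‖μ i‖)) ∧
      r.degree < (n : WithBot ℕ) ∧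
      ∀ z : ℂ, ‖z‖ < ρ →
        ∑' k, u k * z ^ k = (∏ i, (z - μ i)) * (∑' k, q k * z ^ k) + r.eval z := by
  intro n
  induction n with
  | zero =>
    intro μ hμ u hu
    refine ⟨u, 0, hu, by simp, ?_, ?_⟩
    · rw [Polynomial.degree_zero]
      exact WithBot.bot_lt_coe 0
    · intro z hz; simp
  | succ n ih =>
    intro μ hμ u hu
    obtain ⟨qt, c, hqt, hqtb, hqteq⟩ := step hρ (hμ (Fin.last n)) hu
    obtain ⟨q, r₁, hq, hqb, hr₁deg, hr₁eq⟩ := ih (fun i => μ i.castSucc) (fun i => hμ _) qt hqt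
    set m := μ (Fin.last n) with hm
    refine ⟨q, (X - C m) * r₁ + C c, hq, ?_, ?_, ?_⟩
    · have hP : (0:ℝ) < ∏ i : Fin n, (ρ - ‖μ i.castSucc‖) :=
        Finset.prod_pos (fun i _ => by linarith [hμ i.castSucc])
      have hρm : (0:ℝ) < ρ - ‖m‖ := by linarith [hμ (Fin.last n)]
      have h1 : (∑' k, ‖qt k‖ * ρ ^ k) / (∏ i : Fin n, (ρ - ‖μ i.castSucc‖))
          ≤ ((∑' k, ‖u k‖ * ρ ^ k) / (ρ - ‖m‖))
            / (∏ i : Fin n, (ρ - ‖μ i.castSucc‖)) :=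
        (div_le_div_iff_of_pos_right hP).mpr hqtb
      refine le_trans (le_trans hqb h1) (le_of_eq ?_)
      rw [Fin.prod_univ_castSucc, div_div, mul_comm]
    · have hrC : (Polynomial.C c).degree < (((n+1 : ℕ)) : WithBot ℕ) :=
        lt_of_le_of_lt Polynomial.degree_C_le (by exact_mod_cast Nat.succ_pos n)
      refine lt_of_le_of_lt (Polynomial.degree_add_le _ _) (max_lt ?_ hrC)
      rcases eq_or_ne r₁ 0 with h | h
      · rw [h, mul_zero, Polynomial.degree_zero]
        exact WithBot.bot_lt_coe _
      · have hX : (X - C m : Polynomial ℂ) ≠ 0 := Polynomial.X_sub_C_ne_zero _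
        rw [← Polynomial.natDegree_lt_iff_degree_lt (mul_ne_zero hX h)]
        rw [Polynomial.natDegree_mul hX h, Polynomial.natDegree_X_sub_C]
        have h2 := (Polynomial.natDegree_lt_iff_degree_lt h).mpr hr₁deg
        omega
    · intro z hz
      rw [hqteq z hz, hr₁eq z hz, Fin.prod_univ_castSucc]
      simp only [Polynomial.eval_add, Polynomial.eval_mul, Polynomial.eval_sub,
        Polynomial.eval_X, Polynomial.eval_C, ← hm]
      ring

lemma unique_pair {ρ : ℝ} (hρ : 1 < ρ) {n : ℕ} {μ : Fin n → ℂ}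
    (hμ : ∀ i, ‖μ i‖ < ρ)
    {q₁ q₂ : ℕ → ℂ} {r₁ r₂ : Polynomial ℂ}
    (hq₁ : Summable fun k => ‖q₁ k‖ * ρ ^ k) (hd₁ : r₁.degree < (n : WithBot ℕ))
    (hq₂ : Summable fun k => ‖q₂ k‖ * ρ ^ k) (hd₂ : r₂.degree < (n : WithBot ℕ))
    (heq : ∀ z : ℂ, ‖z‖ < ρ →
      (∏ i, (z - μ i)) * (∑' k, q₁ k * z ^ k) + r₁.eval z
        = (∏ i, (z - μ i)) * (∑' k, q₂ k * z ^ k) + r₂.eval z) :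
    q₁ = q₂ ∧ r₁ = r₂ := by
  have hρ0 : (0:ℝ) < ρ := lt_trans one_pos hρ
  have hd : Summable fun k => ‖q₁ k - q₂ k‖ * ρ ^ k := by
    refine Summable.of_nonneg_of_le (fun k => by positivity) (fun k => ?_) (hq₁.add hq₂)
    calc ‖q₁ k - q₂ k‖ * ρ ^ k
        ≤ (‖q₁ k‖ + ‖q₂ k‖) * ρ ^ k :=
          mul_le_mul_of_nonneg_right (by simpa using norm_sub_le (q₁ k) (q₂ k)) (by positivity)
      _ = ‖q₁ k‖ * ρ ^ k + ‖q₂ k‖ * ρ ^ k := by ring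
  have hQ : ∀ z ∈ {z : ℂ | ‖z‖ < ρ},
      (∏ i, (z - μ i)) * ((fun w : ℂ => ∑' k, (q₁ k - q₂ k) * w ^ k) z) = (r₂ - r₁).eval z := by
    intro z hz
    have e1 : ∑' k, (q₁ k - q₂ k) * z ^ k
        = (∑' k, q₁ k * z ^ k) - ∑' k, q₂ k * z ^ k := by
      rw [← Summable.tsum_sub (summ_eval hq₁ (le_of_lt hz)) (summ_eval hq₂ (le_of_lt hz))]
      exact tsum_congr fun k => by ring
    simp only [e1, Polynomial.eval_sub]
    linear_combination heq z hz
  obtain ⟨r', hfac, hQ'⟩ := div_lemma hρ0 n μ hμ _ (contOn hd) _ hQ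
  have hr'0 : r' = 0 := by
    by_contra h
    have hdeg : (r₂ - r₁).degree < (n : WithBot ℕ) :=
      lt_of_le_of_lt (Polynomial.degree_sub_le _ _) (max_lt hd₂ hd₁)
    have hPne : ∀ i ∈ (Finset.univ : Finset (Fin n)), (X - C (μ i) : Polynomial ℂ) ≠ 0 :=
      fun i _ => Polynomial.X_sub_C_ne_zero _
    have hne : ((∏ i, (X - C (μ i))) * r' : Polynomial ℂ) ≠ 0 :=
      mul_ne_zero (Finset.prod_ne_zero_iff.mpr hPne) h
    rw [hfac, ← Polynomial.natDegree_lt_iff_degree_lt hne] at hdeg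
    rw [Polynomial.natDegree_mul (Finset.prod_ne_zero_iff.mpr hPne) h] at hdeg
    rw [Polynomial.natDegree_prod _ _ hPne] at hdeg
    simp only [Polynomial.natDegree_X_sub_C, Finset.sum_const, Finset.card_univ,
      Fintype.card_fin, smul_eq_mul, mul_one] at hdeg
    omega
  have hr : r₁ = r₂ := by
    have : r₂ - r₁ = 0 := by rw [hfac, hr'0, mul_zero]
    linear_combination -this
  have hq : q₁ = q₂ := by
    have hzero : ∀ z : ℂ, ‖z‖ < ρ → ∑' k, (q₁ k - q₂ k) * z ^ k = 0 := by
      intro z hz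
      rw [hQ' z hz, hr'0, Polynomial.eval_zero]
    have := coeff_zero hρ hd hzero
    funext k
    have hk := this k
    linear_combination hk
  exact ⟨hq, hr⟩

theorem euclidean_division_in_wiener_algebra
    (ρ : ℝ) (hρ : 1 < ρ) (n : ℕ) (hn : 1 ≤ n)
    (μ : Fin n → ℂ) (hμ : ∀ i, ‖μ i‖ < ρ)
    (u : ℕ → ℂ) (hu : Summable fun k => ‖u k‖ * ρ ^ k) :
    (∃! qr : (ℕ → ℂ) × Polynomial ℂ,
      (Summable fun k => ‖qr.1 k‖ * ρ ^ k) ∧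
      qr.2.degree < (n : WithBot ℕ) ∧
      ∀ z : ℂ, ‖z‖ < ρ →
        ∑' k : ℕ, u k * z ^ k
          = (∏ i : Fin n, (z - μ i)) * (∑' k : ℕ, qr.1 k * z ^ k) + qr.2.eval z) ∧
    (∀ (q : ℕ → ℂ) (r : Polynomial ℂ),
      (Summable fun k => ‖q k‖ * ρ ^ k) →
      r.degree < (n : WithBot ℕ) →
      (∀ z : ℂ, ‖z‖ < ρ →
        ∑' k : ℕ, u k * z ^ k
          = (∏ i : Fin n, (z - μ i)) * (∑' k : ℕ, q k * z ^ k) + r.eval z) →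
      (∑' k : ℕ, ‖q k‖ * ρ ^ k)
        ≤ (∑' k : ℕ, ‖u k‖ * ρ ^ k) / ∏ i : Fin n, (ρ - ‖μ i‖)) := by
  obtain ⟨q₀, r₀, hq₀, hb₀, hd₀, he₀⟩ := exist hρ n μ hμ u hu
  constructor
  · refine ⟨(q₀, r₀), ⟨hq₀, hd₀, he₀⟩, ?_⟩
    rintro ⟨q, r⟩ ⟨hq, hd, he⟩
    obtain ⟨h1, h2⟩ := unique_pair hρ hμ hq hd hq₀ hd₀
      (fun z hz => by rw [← he z hz, ← he₀ z hz])
    simp only [Prod.mk.injEq]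
    exact ⟨h1, h2⟩
  · intro q r hq hd he
    obtain ⟨h1, h2⟩ := unique_pair hρ hμ hq hd hq₀ hd₀
      (fun z hz => by rw [← he z hz, ← he₀ z hz])
    rw [h1]
    exact hb₀
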